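/- Let S be a real Hilbert space equipped with a bounded symplectic form ω (a bounded, skew-symmetric, weakly nondegenerate bilinear form represented by a topological isomorphism). Then there exists an inner product ⟨·,·⟩₁ on S, equivalent to the original one, and a linear isometry J of (S, ⟨·,·⟩₁) with J² = -Id, such that ω(u,v) = ⟨Ju, v⟩₁ for all u, v ∈ S. -/

import Mathlib

open Finset

noncomputable def sqrtCoeff (n : ℕ) : ℝ :=
  if n = 0 then 0 else 2 * (catalan (n - 1)) / 4 ^ n

lemma sqrtCoeff_nonneg (n : ℕ) : 0 ≤ sqrtCoeff n := by
  unfold sqrtCoeff; split <;> positivity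

lemma sqrtCoeff_zero : sqrtCoeff 0 = 0 := by simp [sqrtCoeff]

lemma sqrtCoeff_succ' (n : ℕ) : sqrtCoeff (n+1) = 2 * catalan n / 4 ^ (n+1) := by
  simp [sqrtCoeff]

lemma sqrtCoeff_one : sqrtCoeff 1 = 1/2 := by norm_num [sqrtCoeff_succ' 0]

lemma sqrtCoeff_conv (n : ℕ) :
    ∑ p ∈ antidiagonal n, sqrtCoeff p.1 * sqrtCoeff p.2
      = 2 * sqrtCoeff n - (if n = 1 then 1 else 0) := by
  match n with
  | 0 => simp [sqrtCoeff_zero]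
  | 1 => simp [Finset.Nat.antidiagonal_succ, sqrtCoeff_zero, sqrtCoeff_one]
  | (m+2) =>
    rw [Finset.Nat.antidiagonal_succ_succ', Finset.sum_cons, Finset.sum_cons, Finset.sum_map]
    simp only [sqrtCoeff_zero, zero_mul, mul_zero, zero_add, add_zero]
    have h1 : ∀ p : ℕ × ℕ, p ∈ antidiagonal m →
        sqrtCoeff (p.1+1) * sqrtCoeff (p.2+1)
          = (4 / 4^(m+2)) * ((catalan p.1 : ℝ) * catalan p.2) := by
      rintro ⟨k, l⟩ hp
      rw [Finset.HasAntidiagonal.mem_antidiagonal] at hp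
      simp only at hp
      rw [sqrtCoeff_succ', sqrtCoeff_succ', div_mul_div_comm, ← pow_add]
      have hkl : k + 1 + (l + 1) = m + 2 := by omega
      rw [hkl]; ring
    simp only [Function.Embedding.coe_prodMap, Function.Embedding.coeFn_mk, Prod.map_fst,
      Prod.map_snd, Nat.succ_eq_add_one]
    rw [Finset.sum_congr rfl (fun p hp => h1 p hp), ← Finset.mul_sum]
    have h2 : ∑ p ∈ antidiagonal m, (catalan p.1 : ℝ) * catalan p.2
        = (catalan (m+1) : ℝ) := by
      rw [catalan_succ']
      push_cast
      rfl
    rw [h2, if_neg (by omega), sub_zero, show m + 2 = (m+1)+1 from rfl, sqrtCoeff_succ']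
    ring

lemma centralBinom_identity (m : ℕ) :
    2 * catalan m + Nat.centralBinom (m+1) = 4 * Nat.centralBinom m := by
  have h := Nat.succ_mul_centralBinom_succ m
  have h2 := succ_mul_catalan_eq_centralBinom m
  have key : (m+1) * (2 * catalan m + Nat.centralBinom (m+1))
      = (m+1) * (4 * Nat.centralBinom m) := by
    rw [Nat.mul_add, ← mul_assoc, mul_comm (m+1) 2, mul_assoc, h2, h]
    ring
  exact Nat.eq_of_mul_eq_mul_left (Nat.succ_pos m) key

noncomputable def cbN (m : ℕ) : ℝ := (Nat.centralBinom m : ℝ) / 4 ^ m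

lemma sqrtCoeff_succ_eq (m : ℕ) : sqrtCoeff (m+1) = cbN m - cbN (m+1) := by
  have h : (2 * catalan m + Nat.centralBinom (m+1) : ℝ) = 4 * Nat.centralBinom m := by
    exact_mod_cast congrArg (fun k : ℕ => (k : ℝ)) (centralBinom_identity m)
  have key : cbN m - cbN (m+1)
      = (4 * (Nat.centralBinom m : ℝ) - Nat.centralBinom (m+1)) / 4^(m+1) := by
    rw [cbN, cbN, pow_succ]
    have h4' : (4:ℝ)^m ≠ 0 := by positivity
    field_simp
  rw [sqrtCoeff_succ', key]
  congr 1
  linarith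

lemma sqrtCoeff_sum_range_le (N : ℕ) : ∑ n ∈ range N, sqrtCoeff n ≤ 1 := by
  match N with
  | 0 => norm_num
  | (M+1) =>
    rw [Finset.sum_range_succ']
    simp only [sqrtCoeff_zero, add_zero]
    rw [Finset.sum_congr rfl (fun i _ => sqrtCoeff_succ_eq i), Finset.sum_range_sub']
    have h0 : cbN 0 = 1 := by simp [cbN, Nat.centralBinom]
    have hM : 0 ≤ cbN M := by unfold cbN; positivity
    linarith

lemma sqrtCoeff_summable : Summable sqrtCoeff :=
  summable_of_sum_range_le sqrtCoeff_nonneg (fun n => sqrtCoeff_sum_range_le n)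

lemma sqrtCoeff_tsum_le : ∑' n, sqrtCoeff n ≤ 1 :=
  Summable.tsum_le_of_sum_range_le sqrtCoeff_summable (fun n => sqrtCoeff_sum_range_le n)

open RealInnerProductSpace

lemma opNorm_le_of_quadratic {S : Type*} [NormedAddCommGroup S] [InnerProductSpace ℝ S]
    (x : S →L[ℝ] S) (hsym : ∀ u v : S, ⟪x u, v⟫ = ⟪u, x v⟫) {r : ℝ} (hr : 0 ≤ r)
    (h1 : ∀ u : S, 0 ≤ ⟪x u, u⟫) (h2 : ∀ u : S, ⟪x u, u⟫ ≤ r * ‖u‖^2) : ‖x‖ ≤ r := by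
  have key : ∀ w v : S, ⟪x w, v⟫ ≤ (r/2) * (‖w‖^2 + ‖v‖^2) := by
    intro w v
    have hvw : ⟪x v, w⟫ = ⟪x w, v⟫ := by rw [real_inner_comm, hsym]
    have e1 : ⟪x (w+v), w+v⟫ = ⟪x w, w⟫ + 2 * ⟪x w, v⟫ + ⟪x v, v⟫ := by
      simp only [map_add, inner_add_left, inner_add_right]
      linarith [hvw]
    have e2 : ⟪x (w-v), w-v⟫ = ⟪x w, w⟫ - 2 * ⟪x w, v⟫ + ⟪x v, v⟫ := by
      simp only [map_sub, inner_sub_left, inner_sub_right]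
      linarith [hvw]
    have p1 := h1 (w - v)
    have p2 := h2 (w + v)
    have q1 : ‖w+v‖^2 = ‖w‖^2 + 2*⟪w,v⟫ + ‖v‖^2 := by
      rw [← real_inner_self_eq_norm_sq, ← real_inner_self_eq_norm_sq, ← real_inner_self_eq_norm_sq]
      simp only [inner_add_left, inner_add_right]
      linarith [real_inner_comm w v]
    have q2 : ‖w-v‖^2 = ‖w‖^2 - 2*⟪w,v⟫ + ‖v‖^2 := by
      rw [← real_inner_self_eq_norm_sq, ← real_inner_self_eq_norm_sq, ← real_inner_self_eq_norm_sq]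
      simp only [inner_sub_left, inner_sub_right]
      linarith [real_inner_comm w v]
    -- 4⟪xw,v⟫ = e1 - e2 ≤ r‖w+v‖²; also ≥ -r‖w-v‖²
    have h3 : 0 ≤ r * ‖w-v‖^2 := by positivity
    nlinarith [e1, e2, p1, p2, q1, q2]
  refine x.opNorm_le_bound hr (fun u => ?_)
  rcases eq_or_ne (x u) 0 with h | h
  · rw [h, norm_zero]; positivity
  have hu : u ≠ 0 := by rintro rfl; simp at h
  have hxu : 0 < ‖x u‖ := norm_pos_iff.mpr h
  have hun : 0 < ‖u‖ := norm_pos_iff.mpr hu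
  set s : ℝ := Real.sqrt (‖x u‖ / ‖u‖) with hs
  have hs0 : 0 < s := Real.sqrt_pos.mpr (by positivity)
  have hs2 : s^2 = ‖x u‖ / ‖u‖ := Real.sq_sqrt (by positivity)
  have := key (s • u) (s⁻¹ • x u)
  rw [map_smul, inner_smul_left, inner_smul_right, norm_smul, norm_smul] at this
  have e : (starRingEnd ℝ) s * (s⁻¹ * ⟪x u, x u⟫) = ‖x u‖^2 := by
    simp only [starRingEnd_apply, star_trivial]
    rw [← mul_assoc, mul_inv_cancel₀ (ne_of_gt hs0), one_mul, real_inner_self_eq_norm_sq]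
  rw [e] at this
  have e2 : (‖s • (0:S)‖) = 0 := by simp
  have hb : (‖s‖ * ‖u‖)^2 + (‖s⁻¹‖ * ‖x u‖)^2 = s^2*‖u‖^2 + (s^2)⁻¹*‖x u‖^2 := by
    rw [Real.norm_eq_abs, Real.norm_eq_abs, abs_of_pos hs0, abs_of_pos (by positivity)]
    ring
  rw [mul_pow, mul_pow] at this
  have hval : s^2*‖u‖^2 + (s^2)⁻¹*‖x u‖^2 = 2 * (‖u‖ * ‖x u‖) := by
    rw [hs2]
    field_simp
    ring
  have : ‖x u‖^2 ≤ (r/2) * (2 * (‖u‖ * ‖x u‖)) := by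
    calc ‖x u‖^2 ≤ (r/2) * ((‖s‖*‖u‖)^2 + (‖s⁻¹‖*‖x u‖)^2) := by
          rw [mul_pow, mul_pow]; exact this
      _ = (r/2) * (2 * (‖u‖ * ‖x u‖)) := by rw [hb, hval]
  nlinarith [this, hxu, hun]

lemma sqrt_series {R : Type*} [NormedRing R] [NormedAlgebra ℝ R] [CompleteSpace R]
    (x : R) {r : ℝ} (hr0 : 0 ≤ r) (hr1 : r < 1) (hx : ‖x‖ ≤ r) :
    Summable (fun n => sqrtCoeff n • x ^ n) ∧
    ‖∑' n, sqrtCoeff n • x ^ n‖ ≤ r ∧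
    (∑' n, sqrtCoeff n • x ^ n) * (∑' n, sqrtCoeff n • x ^ n)
      = (2:ℝ) • (∑' n, sqrtCoeff n • x ^ n) - x := by
  set f := fun n => sqrtCoeff n • x ^ n with hfdef
  have hnorm : ∀ n, ‖f n‖ ≤ sqrtCoeff n * r ^ n := by
    intro n
    match n with
    | 0 => simp [hfdef, sqrtCoeff_zero]
    | (n+1) =>
      rw [hfdef]
      simp only
      rw [norm_smul, Real.norm_eq_abs, abs_of_nonneg (sqrtCoeff_nonneg _)]
      have h1 : ‖x ^ (n+1)‖ ≤ ‖x‖ ^ (n+1) := norm_pow_le' x (Nat.succ_pos n)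
      have h2 : ‖x‖ ^ (n+1) ≤ r ^ (n+1) := pow_le_pow_left₀ (norm_nonneg x) hx _
      exact mul_le_mul_of_nonneg_left (le_trans h1 h2) (sqrtCoeff_nonneg _)
  have hb : ∀ n, sqrtCoeff n * r ^ n ≤ sqrtCoeff n := by
    intro n
    have h1 : r ^ n ≤ 1 := pow_le_one₀ hr0 (le_of_lt hr1)
    nlinarith [sqrtCoeff_nonneg n]
  have hsb : Summable (fun n => sqrtCoeff n * r ^ n) :=
    sqrtCoeff_summable.of_nonneg_of_le (fun n => mul_nonneg (sqrtCoeff_nonneg n) (pow_nonneg hr0 n)) hb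
  have hfn : Summable (fun n => ‖f n‖) := hsb.of_nonneg_of_le (fun n => norm_nonneg _) hnorm
  have hf : Summable f := hfn.of_norm
  refine ⟨hf, ?_, ?_⟩
  · have hbr : ∀ n, sqrtCoeff n * r ^ n ≤ sqrtCoeff n * r := by
      intro n
      match n with
      | 0 => simp [sqrtCoeff_zero]
      | (n+1) =>
        have : r ^ (n+1) ≤ r ^ 1 := pow_le_pow_of_le_one hr0 (le_of_lt hr1) (Nat.one_le_iff_ne_zero.mpr (Nat.succ_ne_zero n))
        rw [pow_one] at this
        exact mul_le_mul_of_nonneg_left this (sqrtCoeff_nonneg _)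
    calc ‖∑' n, f n‖ ≤ ∑' n, ‖f n‖ := norm_tsum_le_tsum_norm hfn
      _ ≤ ∑' n, sqrtCoeff n * r ^ n := Summable.tsum_le_tsum hnorm hfn hsb
      _ ≤ ∑' n, sqrtCoeff n * r := Summable.tsum_le_tsum hbr hsb (sqrtCoeff_summable.mul_right r)
      _ = (∑' n, sqrtCoeff n) * r := tsum_mul_right
      _ ≤ 1 * r := mul_le_mul_of_nonneg_right sqrtCoeff_tsum_le hr0
      _ = r := one_mul r
  · have key := tsum_mul_tsum_eq_tsum_sum_antidiagonal_of_summable_norm hfn hfn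
    rw [key]
    have inner_eq : ∀ n, ∑ p ∈ Finset.HasAntidiagonal.antidiagonal n, f p.1 * f p.2
        = (2 * sqrtCoeff n) • x ^ n - (if n = 1 then x else 0) := by
      intro n
      have e1 : ∀ p ∈ Finset.HasAntidiagonal.antidiagonal n, f p.1 * f p.2
          = (sqrtCoeff p.1 * sqrtCoeff p.2) • x ^ n := by
        rintro ⟨k, l⟩ hp
        rw [Finset.HasAntidiagonal.mem_antidiagonal] at hp
        simp only at hp
        rw [hfdef]
        simp only
        rw [smul_mul_smul_comm, ← pow_add, hp]
      rw [Finset.sum_congr rfl e1, ← Finset.sum_smul, sqrtCoeff_conv]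
      rcases eq_or_ne n 1 with h | h
      · subst h
        simp [sub_smul, sqrtCoeff_one]
      · simp [h, sub_smul]
    rw [tsum_congr inner_eq]
    have heq2 : (fun n => (2 * sqrtCoeff n) • x ^ n) = fun n => (2:ℝ) • f n := by
      funext n; rw [hfdef]; simp only; rw [mul_smul]
    have s1 : Summable (fun n => (2 * sqrtCoeff n) • x ^ n) := by
      rw [heq2]; exact hf.const_smul _
    have s2 : Summable (fun n => if n = 1 then x else (0:R)) := by
      apply summable_of_ne_finset_zero (s := {1})
      intro n hn
      simp only [Finset.mem_singleton] at hn
      simp [hn]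
    rw [Summable.tsum_sub s1 s2]
    have t2 : (∑' n, if n = 1 then x else (0:R)) = x := by
      rw [tsum_eq_single 1]
      · simp
      · intro n hn; simp [hn]
    have t1 : (∑' n, (2 * sqrtCoeff n) • x ^ n) = (2:ℝ) • ∑' n, f n := by
      rw [heq2, Summable.tsum_const_smul _ hf]
    rw [t1, t2]

set_option maxHeartbeats 1000000 in
set_option synthInstance.maxHeartbeats 200000 in
theorem statement0 {S : Type*} [NormedAddCommGroup S] [InnerProductSpace ℝ S] [CompleteSpace S]
    (T : S ≃L[ℝ] S) (ω : S → S → ℝ)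
    (hωT : ∀ u v : S, ω u v = ⟪T u, v⟫)
    (hskew : ∀ u v : S, ω u v = -ω v u) :
    ∃ (p : S → S → ℝ) (J : S →ₗ[ℝ] S),
      (∀ u v : S, p u v = p v u) ∧
      (∀ u v w : S, p (u + v) w = p u w + p v w) ∧
      (∀ (a : ℝ) (u v : S), p (a • u) v = a * p u v) ∧
      (∃ c C : ℝ, 0 < c ∧ 0 < C ∧ ∀ u : S, c * ‖u‖ ^ 2 ≤ p u u ∧ p u u ≤ C * ‖u‖ ^ 2) ∧
      (∀ u v : S, p (J u) (J v) = p u v) ∧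
      (∀ u : S, J (J u) = -u) ∧
      (∀ u v : S, ω u v = p (J u) v) := by
  classical
  set T' : S →L[ℝ] S := (T : S →L[ℝ] S) with hT'def
  have hT'app : ∀ u, T' u = T u := fun u => rfl
  have hT'skew : ∀ u v : S, ⟪T' u, v⟫ = -⟪u, T' v⟫ := by
    intro u v
    have h3 := hskew u v
    rw [hωT u v, hωT v u] at h3
    rw [hT'app, hT'app, h3, real_inner_comm]
  -- constants
  set m : ℝ := ‖(T.symm : S →L[ℝ] S)‖ + 1 with hmdef
  have hm1 : 1 ≤ m := by
    have := norm_nonneg (T.symm : S →L[ℝ] S); rw [hmdef]; linarith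
  have hm0 : 0 < m := lt_of_lt_of_le one_pos hm1
  set C : ℝ := ‖T'‖^2 + 1 with hCdef
  have hC1 : 1 ≤ C := by
    have : (0:ℝ) ≤ ‖T'‖^2 := sq_nonneg _; rw [hCdef]; linarith
  have hC0 : 0 < C := lt_of_lt_of_le one_pos hC1
  set c : ℝ := (m^2)⁻¹ with hcdef
  have hc0 : 0 < c := by rw [hcdef]; positivity
  set r : ℝ := 1 - c / C with hrdef
  have hr0 : 0 ≤ r := by
    have hm2 : 1 ≤ m^2 := by nlinarith
    have hcc : c ≤ 1 := by
      rw [hcdef]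
      have h := inv_mul_cancel₀ (a := m^2) (by positivity : (m:ℝ)^2 ≠ 0)
      have hpos : (0:ℝ) < (m^2)⁻¹ := by positivity
      nlinarith [mul_le_mul_of_nonneg_left hm2 (le_of_lt hpos)]
    have : c / C ≤ 1 := by rw [div_le_one hC0]; linarith
    rw [hrdef]; linarith
  have hr1 : r < 1 := by
    have : 0 < c / C := div_pos hc0 hC0
    rw [hrdef]; linarith
  -- the positive operator A = -T'²  (= T'* T')
  set A : S →L[ℝ] S := -(T' * T') with hAdef
  have hA_app : ∀ u, A u = -(T' (T' u)) := fun u => rfl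
  have hAq : ∀ u, ⟪A u, u⟫ = ‖T' u‖^2 := by
    intro u
    rw [hA_app u, inner_neg_left, hT'skew (T' u) u, neg_neg, real_inner_self_eq_norm_sq]
  have hAsym : ∀ u v, ⟪A u, v⟫ = ⟪u, A v⟫ := by
    intro u v
    have e1 : ⟪T' (T' u), v⟫ = -⟪T' u, T' v⟫ := hT'skew (T' u) v
    have e2 : ⟪T' u, T' v⟫ = -⟪u, T' (T' v)⟫ := hT'skew u (T' v)
    rw [hA_app u, hA_app v, inner_neg_left, inner_neg_right, e1, e2]
    ring
  have hAlow : ∀ u, c * ‖u‖^2 ≤ ⟪A u, u⟫ := by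
    intro u
    rw [hAq u]
    have h1 : ‖u‖ ≤ m * ‖T' u‖ := by
      have e : u = T.symm (T u) := (T.symm_apply_apply u).symm
      calc ‖u‖ = ‖(T.symm : S →L[ℝ] S) (T' u)‖ := by
            rw [hT'app]; exact congrArg norm e
        _ ≤ ‖(T.symm : S →L[ℝ] S)‖ * ‖T' u‖ := ContinuousLinearMap.le_opNorm _ _
        _ ≤ m * ‖T' u‖ := by
            apply mul_le_mul_of_nonneg_right _ (norm_nonneg _)
            rw [hmdef]; linarith
    have h2 : ‖u‖^2 ≤ m^2 * ‖T' u‖^2 := by nlinarith [norm_nonneg u, norm_nonneg (T' u)]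
    have hm2 : (0:ℝ) < m^2 := by positivity
    have h3 : (m^2)⁻¹ * ‖u‖^2 ≤ (m^2)⁻¹ * (m^2 * ‖T' u‖^2) :=
      mul_le_mul_of_nonneg_left h2 (by positivity)
    rw [← mul_assoc, inv_mul_cancel₀ (ne_of_gt hm2), one_mul] at h3
    rw [hcdef]; exact h3
  have hAup : ∀ u, ⟪A u, u⟫ ≤ C * ‖u‖^2 := by
    intro u
    rw [hAq u]
    have h1 : ‖T' u‖ ≤ ‖T'‖ * ‖u‖ := ContinuousLinearMap.le_opNorm _ _
    rw [hCdef]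
    nlinarith [norm_nonneg (T' u), norm_nonneg u, norm_nonneg T']
  -- the contraction x
  set x : S →L[ℝ] S := 1 - C⁻¹ • A with hxdef
  have hx_app : ∀ u, x u = u - C⁻¹ • A u := fun u => rfl
  have hxsym : ∀ u v, ⟪x u, v⟫ = ⟪u, x v⟫ := by
    intro u v
    rw [hx_app, hx_app, inner_sub_left, inner_sub_right,
      real_inner_smul_left, real_inner_smul_right, hAsym u v]
  have hxq0 : ∀ u, 0 ≤ ⟪x u, u⟫ := by
    intro u
    rw [hx_app, inner_sub_left, real_inner_smul_left, real_inner_self_eq_norm_sq]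
    have h := hAup u
    have h2 : C⁻¹ * ⟪A u, u⟫ ≤ C⁻¹ * (C * ‖u‖^2) :=
      mul_le_mul_of_nonneg_left h (by positivity)
    rw [← mul_assoc, inv_mul_cancel₀ (ne_of_gt hC0), one_mul] at h2
    linarith
  have hxqr : ∀ u, ⟪x u, u⟫ ≤ r * ‖u‖^2 := by
    intro u
    rw [hx_app, inner_sub_left, real_inner_smul_left, real_inner_self_eq_norm_sq, hrdef]
    have h := hAlow u
    have h2 : C⁻¹ * (c * ‖u‖^2) ≤ C⁻¹ * ⟪A u, u⟫ :=
      mul_le_mul_of_nonneg_left h (by positivity)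
    have e : C⁻¹ * (c * ‖u‖^2) = (c/C) * ‖u‖^2 := by
      field_simp
    nlinarith [h2, e]
  have hxnorm : ‖x‖ ≤ r := opNorm_le_of_quadratic x hxsym hr0 hxq0 hxqr
  -- the square-root series
  obtain ⟨hfsum, hynorm, hysq⟩ := sqrt_series x hr0 hr1 hxnorm
  set y : S →L[ℝ] S := ∑' n, sqrtCoeff n • x ^ n with hydef
  -- commutation
  have hTA : Commute T' A := (((Commute.refl T').mul_right (Commute.refl T')).neg_right)
  have hTx : Commute T' x := (Commute.one_right T').sub_right (hTA.smul_right C⁻¹)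
  have hTy : Commute T' y := by
    rw [hydef]
    exact Commute.tsum_right _ (fun n => ((hTx.pow_right n).smul_right _))
  -- symmetry of powers and of y
  have hpowsym : ∀ (n : ℕ) (u v : S), ⟪(x ^ n) u, v⟫ = ⟪u, (x ^ n) v⟫ := by
    intro n
    induction n with
    | zero => intro u v; simp
    | succ n ih =>
      intro u v
      rw [pow_succ, ContinuousLinearMap.mul_apply, ContinuousLinearMap.mul_apply]
      have hc := DFunLike.congr_fun ((Commute.refl x).pow_right n).eq v
      simp only [ContinuousLinearMap.mul_apply] at hc
      rw [ih (x u) v, hxsym u ((x ^ n) v), hc]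
  have happ : ∀ u : S, y u = ∑' n, (sqrtCoeff n • x ^ n) u := by
    intro u
    rw [hydef]
    have h := (ContinuousLinearMap.apply ℝ S u).map_tsum hfsum
    simpa [ContinuousLinearMap.apply_apply] using h
  have hsumapp : ∀ u : S, Summable (fun n => (sqrtCoeff n • x ^ n) u) :=
    fun u => hfsum.map (ContinuousLinearMap.apply ℝ S u) (ContinuousLinearMap.continuous _)
  have hysym : ∀ u v : S, ⟪y u, v⟫ = ⟪u, y v⟫ := by
    intro u v
    rw [happ u, happ v]
    have e1 : ∀ (w : S) (g : ℕ → S), Summable g → ⟪(∑' n, g n), w⟫ = ∑' n, ⟪g n, w⟫ := by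
      intro w g hg
      calc ⟪(∑' n, g n), w⟫ = ⟪w, ∑' n, g n⟫ := real_inner_comm _ _
        _ = ∑' n, ⟪w, g n⟫ := by
            have h := (innerSL ℝ w).map_tsum hg
            simpa using h
        _ = ∑' n, ⟪g n, w⟫ := tsum_congr (fun n => real_inner_comm _ _)
    rw [e1 v _ (hsumapp u)]
    have e2 : ⟪u, (∑' n, (sqrtCoeff n • x ^ n) v)⟫ = ∑' n, sqrtCoeff n * ⟪u, (x ^ n) v⟫ := by
      have h := (innerSL ℝ u).map_tsum (hsumapp v)
      simpa using h
    rw [e2]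
    refine tsum_congr (fun n => ?_)
    rw [ContinuousLinearMap.smul_apply, real_inner_smul_left, hpowsym n u v]
  -- B = 1 - y and its inverse
  have hy1 : ‖y‖ < 1 := lt_of_le_of_lt hynorm hr1
  set B : S →L[ℝ] S := 1 - y with hBdef
  set uB : (S →L[ℝ] S)ˣ := Units.oneSub y hy1 with huBdef
  have hval : (uB : S →L[ℝ] S) = B := rfl
  set Binv : S →L[ℝ] S := ↑uB⁻¹ with hBinvdef
  have hBBinv : B * Binv = 1 := by rw [← hval]; exact uB.mul_inv
  have hBinvB : Binv * B = 1 := by rw [← hval]; exact uB.inv_mul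
  have hBBinv_app : ∀ u, B (Binv u) = u := by
    intro u
    have h := DFunLike.congr_fun hBBinv u
    simpa [ContinuousLinearMap.mul_apply] using h
  have hBinvB_app : ∀ u, Binv (B u) = u := by
    intro u
    have h := DFunLike.congr_fun hBinvB u
    simpa [ContinuousLinearMap.mul_apply] using h
  have hB_app : ∀ u, B u = u - y u := fun u => rfl
  have hBsym : ∀ u v, ⟪B u, v⟫ = ⟪u, B v⟫ := by
    intro u v
    rw [hB_app, hB_app, inner_sub_left, inner_sub_right, hysym u v]
  have hBsq : B * B = C⁻¹ • A := by
    have e : B * B = 1 - (2:ℝ) • y + y * y := by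
      rw [hBdef, two_smul]
      noncomm_ring
    rw [hysq] at e
    have e2 : B * B = 1 - x := by rw [e]; abel
    rw [e2, hxdef]
    abel
  have hTB : Commute T' B := (Commute.one_right T').sub_right hTy
  have hTuB : Commute T' (uB : S →L[ℝ] S) := by rw [hval]; exact hTB
  have hTBinv : Commute T' Binv := hTuB.units_inv_right
  have hTBinv_app : ∀ u, T' (Binv u) = Binv (T' u) := by
    intro u
    have h := DFunLike.congr_fun hTBinv.eq u
    simpa [ContinuousLinearMap.mul_apply] using h
  have hBinvsym : ∀ u v, ⟪Binv u, v⟫ = ⟪u, Binv v⟫ := by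
    intro u v
    conv_lhs => rw [← hBBinv_app v]
    rw [← hBsym, hBBinv_app]
  have hBlow : ∀ u, (1 - r) * ‖u‖^2 ≤ ⟪B u, u⟫ := by
    intro u
    rw [hB_app, inner_sub_left, real_inner_self_eq_norm_sq]
    have h1 : ⟪y u, u⟫ ≤ ‖y u‖ * ‖u‖ := real_inner_le_norm _ _
    have h2 : ‖y u‖ ≤ ‖y‖ * ‖u‖ := ContinuousLinearMap.le_opNorm _ _
    nlinarith [norm_nonneg u, norm_nonneg (y u), norm_nonneg y, hynorm]
  -- P = √C • B
  set sC : ℝ := Real.sqrt C with hsCdef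
  have hsC0 : 0 < sC := Real.sqrt_pos.mpr hC0
  have hsC2 : sC * sC = C := Real.mul_self_sqrt (le_of_lt hC0)
  set P : S →L[ℝ] S := sC • B with hPdef
  set Pinv : S →L[ℝ] S := sC⁻¹ • Binv with hPinvdef
  have hP_app : ∀ u, P u = sC • B u := fun u => rfl
  have hPinv_app : ∀ u, Pinv u = sC⁻¹ • Binv u := fun u => rfl
  have hPPinv_app : ∀ u, P (Pinv u) = u := by
    intro u
    rw [hPinv_app, hP_app, map_smul, smul_smul,
      mul_inv_cancel₀ (ne_of_gt hsC0), one_smul, hBBinv_app]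
  have hPinvP_app : ∀ u, Pinv (P u) = u := by
    intro u
    rw [hP_app, hPinv_app, map_smul, smul_smul,
      inv_mul_cancel₀ (ne_of_gt hsC0), one_smul, hBinvB_app]
  have hPsym : ∀ u v, ⟪P u, v⟫ = ⟪u, P v⟫ := by
    intro u v
    rw [hP_app, hP_app, real_inner_smul_left, real_inner_smul_right, hBsym u v]
  have hPinvsym : ∀ u v, ⟪Pinv u, v⟫ = ⟪u, Pinv v⟫ := by
    intro u v
    rw [hPinv_app, hPinv_app, real_inner_smul_left, real_inner_smul_right, hBinvsym u v]
  have hPsq_app : ∀ u, P (P u) = A u := by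
    intro u
    have hBB : B (B u) = C⁻¹ • A u := by
      have h := DFunLike.congr_fun hBsq u
      simpa [ContinuousLinearMap.mul_apply] using h
    simp only [hP_app]
    rw [map_smul, smul_smul, hsC2, hBB, smul_smul,
      mul_inv_cancel₀ (ne_of_gt hC0), one_smul]
  have hTPinv_app : ∀ u, T' (Pinv u) = Pinv (T' u) := by
    intro u
    rw [hPinv_app, map_smul, hTBinv_app, hPinv_app]
  -- conclusion
  set Jc : S →L[ℝ] S := Pinv * T' with hJcdef
  have hJ_app : ∀ u, Jc u = Pinv (T' u) := fun u => rfl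
  refine ⟨fun u v => ⟪P u, v⟫, (Jc : S →ₗ[ℝ] S), ?_, ?_, ?_, ?_, ?_, ?_, ?_⟩
  · intro u v
    show ⟪P u, v⟫ = ⟪P v, u⟫
    rw [hPsym u v, real_inner_comm]
  · intro u v w
    show ⟪P (u + v), w⟫ = ⟪P u, w⟫ + ⟪P v, w⟫
    rw [map_add, inner_add_left]
  · intro a u v
    show ⟪P (a • u), v⟫ = a * ⟪P u, v⟫
    rw [map_smul, real_inner_smul_left]
  · refine ⟨sC * (1 - r), ‖P‖ + 1, mul_pos hsC0 (by linarith), by positivity, fun u => ⟨?_, ?_⟩⟩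
    · show sC * (1 - r) * ‖u‖ ^ 2 ≤ ⟪P u, u⟫
      rw [hP_app, real_inner_smul_left]
      have h := hBlow u
      have h2 : sC * ((1 - r) * ‖u‖^2) ≤ sC * ⟪B u, u⟫ :=
        mul_le_mul_of_nonneg_left h (le_of_lt hsC0)
      nlinarith [h2]
    · show ⟪P u, u⟫ ≤ (‖P‖ + 1) * ‖u‖ ^ 2
      nlinarith [real_inner_le_norm (P u) u, ContinuousLinearMap.le_opNorm P u,
        norm_nonneg u, norm_nonneg P]
  · intro u v
    show ⟪P ((Jc : S →ₗ[ℝ] S) u), (Jc : S →ₗ[ℝ] S) v⟫ = ⟪P u, v⟫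
    simp only [ContinuousLinearMap.coe_coe, hJ_app]
    calc ⟪P (Pinv (T' u)), Pinv (T' v)⟫
        = ⟪T' u, Pinv (T' v)⟫ := by rw [hPPinv_app]
      _ = ⟪Pinv (T' u), T' v⟫ := (hPinvsym (T' u) (T' v)).symm
      _ = -⟪T' (Pinv (T' u)), v⟫ := by linarith [hT'skew (Pinv (T' u)) v]
      _ = -⟪Pinv (T' (T' u)), v⟫ := by rw [hTPinv_app]
      _ = ⟪Pinv (A u), v⟫ := by
          rw [hA_app, map_neg, inner_neg_left]
      _ = ⟪Pinv (P (P u)), v⟫ := by rw [hPsq_app]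
      _ = ⟪P u, v⟫ := by rw [hPinvP_app]
  · intro u
    simp only [ContinuousLinearMap.coe_coe, hJ_app]
    have hTT : T' (T' u) = -(A u) := by rw [hA_app, neg_neg]
    calc Pinv (T' (Pinv (T' u)))
        = Pinv (Pinv (T' (T' u))) := by rw [hTPinv_app]
      _ = Pinv (Pinv (-(A u))) := by rw [hTT]
      _ = -(Pinv (Pinv (A u))) := by rw [map_neg, map_neg]
      _ = -(Pinv (Pinv (P (P u)))) := by rw [hPsq_app]
      _ = -u := by rw [hPinvP_app, hPinvP_app]
  · intro u v
    show ω u v = ⟪P ((Jc : S →ₗ[ℝ] S) u), v⟫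
    rw [hωT u v]
    simp only [ContinuousLinearMap.coe_coe, hJ_app]
    rw [hPPinv_app (T' u), hT'app]
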